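/- Let p ∈ [1,∞) and r > 0. Consider the ℝ²-persistence module M with M_a = k if a ≥ (0,−1) or a ≥ (−1,0) and M_a = 0 otherwise (identity internal maps where possible), and the free modules Q^{(0,0)}, Q^{(r,r)} on single generators at (0,0) and (r,r). Then d̂_I^p(M, Q^{(r,r)}) ≥ 4^{1/p} r, d̂_I^p(M, Q^{(0,0)}) ≤ 2^{1/p}, and d̂_I^p(Q^{(0,0)}, Q^{(r,r)}) ≤ 2^{1/p} r. Consequently, for r sufficiently large, d̂_I^p(M, Q^{(r,r)}) > d̂_I^p(M, Q^{(0,0)}) + d̂_I^p(Q^{(0,0)}, Q^{(r,r)}), so d̂_I^p fails the triangle inequality. -/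

import Mathlib

open scoped Classical

noncomputable section

/-- A persistence module indexed by a poset `X`, with coefficients in a field `k`:
a functor from `X` to `Vect_k`, given concretely. -/
structure PersMod (X : Type) [PartialOrder X] (k : Type) [Field k] where
  V : X → Type
  [addCommGroup : ∀ a, AddCommGroup (V a)]
  [module : ∀ a, Module k (V a)]
  map : ∀ {a b : X}, a ≤ b → (V a →ₗ[k] V b)
  map_id : ∀ a : X, map (le_refl a) = LinearMap.id
  map_comp : ∀ {a b c : X} (hab : a ≤ b) (hbc : b ≤ c),
    (map hbc).comp (map hab) = map (hab.trans hbc)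

attribute [instance] PersMod.addCommGroup PersMod.module

/-- The free persistence module `⊕_{i} Q^{g i}` on generators at grades `g i`:
at index `a` it is the space of `k`-vectors supported on `{i : g i ≤ a}`. -/
def FreeMod {X : Type} [PartialOrder X] (k : Type) [Field k] {m : ℕ} (g : Fin m → X) :
    PersMod X k where
  V a := {i : Fin m // g i ≤ a} → k
  map {a b} hab :=
    { toFun := fun f i => if h : g i.1 ≤ a then f ⟨i.1, h⟩ else 0
      map_add' := by
        intro f f'; funext i; by_cases h : g i.1 ≤ a <;> simp [h]
      map_smul' := by
        intro c f; funext i; by_cases h : g i.1 ≤ a <;> simp [h] }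
  map_id a := by
    apply LinearMap.ext; intro f; funext i
    simp only [LinearMap.coe_mk, AddHom.coe_mk, LinearMap.id_coe, id_eq]
    rw [dif_pos i.2]
  map_comp {a b c} hab hbc := by
    apply LinearMap.ext; intro f; funext i
    simp only [LinearMap.comp_apply, LinearMap.coe_mk, AddHom.coe_mk]
    by_cases h : g i.1 ≤ a
    · rw [dif_pos (h.trans hab), dif_pos h]
    · rw [dif_neg h]
      by_cases hb : g i.1 ≤ b
      · rw [dif_pos hb, dif_neg h]
      · rw [dif_neg hb]

/-- A morphism of persistence modules: a natural transformation. -/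
structure PersHom {X : Type} [PartialOrder X] {k : Type} [Field k]
    (M N : PersMod X k) where
  app : ∀ a : X, M.V a →ₗ[k] N.V a
  natural : ∀ {a b : X} (h : a ≤ b), (N.map h).comp (app a) = (app b).comp (M.map h)

/-- A set `S` of graded elements generates `M` if every element of `M` is a linear
combination of images of elements of `S` under the internal maps. -/
def IsGenSet {X : Type} [PartialOrder X] {k : Type} [Field k]
    (M : PersMod X k) (S : Set (Σ a : X, M.V a)) : Prop :=
  ∀ (a : X) (v : M.V a),
    v ∈ Submodule.span k {w : M.V a | ∃ s ∈ S, ∃ h : s.1 ≤ a, w = M.map h s.2}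

/-- A basis of a persistence module is a minimal generating set. -/
def IsPMBasis {X : Type} [PartialOrder X] {k : Type} [Field k]
    (M : PersMod X k) (B : Set (Σ a : X, M.V a)) : Prop :=
  IsGenSet M B ∧ ∀ B' ⊆ B, IsGenSet M B' → B' = B

/-- A persistence module is free if it is isomorphic to a finite direct sum of modules
`Q^x` (equivalently, to some `FreeMod g`). -/
def IsFree {X : Type} [PartialOrder X] {k : Type} [Field k] (M : PersMod X k) : Prop :=
  ∃ (m : ℕ) (g : Fin m → X) (φ : PersHom (FreeMod k g) M),
    ∀ a : X, Function.Bijective (φ.app a)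


open scoped ENNReal

/-- `φ` is the morphism of free modules represented by the labeled matrix `(A, rl, cl)`
(rows labeled by `rl`, columns by `cl`). -/
def MatHomSpec {X : Type} [PartialOrder X] {k : Type} [Field k] {r c : ℕ}
    (A : Matrix (Fin r) (Fin c) k) (rl : Fin r → X) (cl : Fin c → X)
    (φ : PersHom (FreeMod k cl) (FreeMod k rl)) : Prop :=
  ∀ (a : X) (f : {j : Fin c // cl j ≤ a} → k) (i : {i : Fin r // rl i ≤ a}),
    φ.app a f i = ∑ j : Fin c, if h : cl j ≤ a then A i.1 j * f ⟨j, h⟩ else 0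

/-- The labeled matrix `(A, rl, cl)` is a presentation matrix of `M`: the matrix map
between the corresponding free modules has cokernel (objectwise) isomorphic to `M`,
witnessed by an objectwise surjection `ψ` with `ker ψ = im φ`. -/
def Presents {X : Type} [PartialOrder X] {k : Type} [Field k] {r c : ℕ}
    (A : Matrix (Fin r) (Fin c) k) (rl : Fin r → X) (cl : Fin c → X)
    (M : PersMod X k) : Prop :=
  ∃ φ : PersHom (FreeMod k cl) (FreeMod k rl), MatHomSpec A rl cl φ ∧
    ∃ ψ : PersHom (FreeMod k rl) M, ∀ a : X,
      Function.Surjective (ψ.app a) ∧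
      LinearMap.ker (ψ.app a) = LinearMap.range (φ.app a)

/-- The ℓ^p-distance between the label vectors of two presentations with the same
underlying matrix (labels in ℝ², total ℓ^p-norm over all coordinates). -/
def labelDist (p : ℝ) {r c : ℕ} (rl rl' : Fin r → ℝ × ℝ) (cl cl' : Fin c → ℝ × ℝ) : ℝ :=
  ((∑ i, (|(rl i).1 - (rl' i).1| ^ p + |(rl i).2 - (rl' i).2| ^ p)) +
   (∑ j, (|(cl j).1 - (cl' j).1| ^ p + |(cl j).2 - (cl' j).2| ^ p))) ^ (1 / p)

/-- `d̂_I^p(M,N)`: the infimum of label distances over all pairs of finite presentations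
of `M` and `N` with the same underlying matrix. -/
def dhatI {k : Type} [Field k] (p : ℝ) (M N : PersMod (ℝ × ℝ) k) : ℝ≥0∞ :=
  ⨅ (r : ℕ) (c : ℕ) (A : Matrix (Fin r) (Fin c) k)
    (rl : Fin r → ℝ × ℝ) (rl' : Fin r → ℝ × ℝ)
    (cl : Fin c → ℝ × ℝ) (cl' : Fin c → ℝ × ℝ)
    (_ : Presents A rl cl M) (_ : Presents A rl' cl' N),
    ENNReal.ofReal (labelDist p rl rl' cl cl')

section Aux

variable {X : Type} [PartialOrder X] {k : Type} [Field k]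

lemma exists_ne_zero_of_rank_one {V : Type} [AddCommGroup V] [Module k V]
    (h : Module.rank k V = 1) : ∃ v : V, v ≠ 0 := by
  have : (0 : Cardinal) < Module.rank k V := by rw [h]; exact zero_lt_one
  exact rank_pos_iff_exists_ne_zero.mp this

lemma spans_of_rank_one {V : Type} [AddCommGroup V] [Module k V]
    (h : Module.rank k V = 1) {v : V} (hv : v ≠ 0) (w : V) : ∃ c : k, c • v = w := by
  have hf : Module.finrank k V = 1 := by
    apply Module.finrank_eq_of_rank_eq; rw [h]; norm_num
  have hs := (finrank_eq_one_iff_of_nonzero v hv).mp hf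
  have hw : w ∈ Submodule.span k {v} := by rw [hs]; exact Submodule.mem_top
  exact Submodule.mem_span_singleton.mp hw

/-- Indicator vector of row `i` in the free module at grade `a`. -/
def ind {n : ℕ} (g : Fin n → X) (a : X) (i : Fin n) : (FreeMod k g).V a :=
  fun i' => if i'.1 = i then (1 : k) else 0

lemma ind_map {n : ℕ} (g : Fin n → X) {a b : X} (hab : a ≤ b) {i : Fin n}
    (hia : g i ≤ a) : (FreeMod k g).map hab (ind g a i) = ind g b i := by
  funext i'
  show (if h : g i'.1 ≤ a then ind g a i ⟨i'.1, h⟩ else 0) = ind g b i i'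
  by_cases hi : i'.1 = i
  · rw [dif_pos (by rw [hi]; exact hia : g i'.1 ≤ a)]
    show (if i'.1 = i then (1:k) else 0) = _
    rw [if_pos hi]
    show _ = (if i'.1 = i then (1:k) else 0)
    rw [if_pos hi]
  · show _ = (if i'.1 = i then (1:k) else 0)
    rw [if_neg hi]
    by_cases h : g i'.1 ≤ a
    · rw [dif_pos h]
      show (if i'.1 = i then (1:k) else 0) = 0
      rw [if_neg hi]
    · rw [dif_neg h]

lemma map_eq_sum_ind {n : ℕ} (g : Fin n → X) {a b : X} (hab : a ≤ b)
    (x : (FreeMod k g).V a) :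
    (FreeMod k g).map hab x = ∑ j : {i : Fin n // g i ≤ a}, x j • ind g b j.1 := by
  funext i'
  have hrhs : (∑ j : {i : Fin n // g i ≤ a}, x j • ind g b j.1) i'
      = ∑ j : {i : Fin n // g i ≤ a}, x j * (if i'.1 = j.1 then 1 else 0) := by
    exact (Finset.sum_apply (M := fun _ => k) i' Finset.univ (fun j => x j • ind g b j.1)).trans rfl
  show (if h : g i'.1 ≤ a then x ⟨i'.1, h⟩ else 0) = _
  rw [hrhs]
  by_cases h : g i'.1 ≤ a
  · rw [dif_pos h, Finset.sum_eq_single (⟨i'.1, h⟩ : {i : Fin n // g i ≤ a})]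
    · rw [if_pos rfl, mul_one]
    · intro j _ hj
      rw [if_neg fun e => hj (Subtype.ext e.symm), mul_zero]
    · intro hmem; exact absurd (Finset.mem_univ _) hmem
  · rw [dif_neg h, eq_comm]
    apply Finset.sum_eq_zero
    intro j _
    rw [if_neg fun e => h (by rw [e]; exact j.2), mul_zero]

/-- The morphism of free modules given by a grading-compatible matrix. -/
def matHom {rn cn : ℕ} (A : Matrix (Fin rn) (Fin cn) k) (rl : Fin rn → X) (cl : Fin cn → X)
    (hcomp : ∀ i j, ¬ rl i ≤ cl j → A i j = 0) :
    PersHom (FreeMod k cl) (FreeMod k rl) where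
  app a :=
    { toFun := fun f i => ∑ j : Fin cn, if h : cl j ≤ a then A i.1 j * f ⟨j, h⟩ else 0
      map_add' := by
        intro f f'
        funext i
        show (∑ j : Fin cn, (_ : k)) = (∑ j : Fin cn, (_ : k)) + (∑ j : Fin cn, (_ : k))
        rw [← Finset.sum_add_distrib]
        apply Finset.sum_congr rfl
        intro j _
        by_cases h : cl j ≤ a
        · rw [dif_pos h, dif_pos h, dif_pos h]
          show A i.1 j * (f _ + f' _) = _
          ring
        · rw [dif_neg h, dif_neg h, dif_neg h, add_zero]
      map_smul' := by
        intro c f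
        funext i
        show (∑ j : Fin cn, _) = c * (∑ j : Fin cn, _)
        rw [Finset.mul_sum]
        apply Finset.sum_congr rfl
        intro j _
        by_cases h : cl j ≤ a
        · rw [dif_pos h, dif_pos h]
          show A i.1 j * (c * f _) = _
          ring
        · rw [dif_neg h, dif_neg h, mul_zero] }
  natural := by
    intro a b hab
    apply LinearMap.ext
    intro f
    funext i
    show (if h : rl i.1 ≤ a then ∑ j : Fin cn, (if h' : cl j ≤ a then A i.1 j * f ⟨j, h'⟩ else 0) else 0)
      = ∑ j : Fin cn, (if h : cl j ≤ b then A i.1 j *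
          (if h' : cl j ≤ a then f ⟨j, h'⟩ else 0) else 0)
    have hrhs : (∑ j : Fin cn, (if h : cl j ≤ b then A i.1 j *
          (if h' : cl j ≤ a then f ⟨j, h'⟩ else 0) else 0))
        = ∑ j : Fin cn, (if h' : cl j ≤ a then A i.1 j * f ⟨j, h'⟩ else 0) := by
      apply Finset.sum_congr rfl
      intro j _
      by_cases h' : cl j ≤ a
      · rw [dif_pos h', dif_pos (h'.trans hab), dif_pos h']
      · rw [dif_neg h']
        by_cases h : cl j ≤ b
        · rw [dif_pos h, dif_neg h', mul_zero]
        · rw [dif_neg h, dif_neg h']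
    rw [hrhs]
    by_cases hi : rl i.1 ≤ a
    · rw [dif_pos hi]
    · rw [dif_neg hi, eq_comm]
      apply Finset.sum_eq_zero
      intro j _
      by_cases h' : cl j ≤ a
      · rw [dif_pos h', hcomp i.1 j (fun hle => hi (hle.trans h')), zero_mul]
      · rw [dif_neg h']

lemma matHom_spec {rn cn : ℕ} (A : Matrix (Fin rn) (Fin cn) k) (rl : Fin rn → X)
    (cl : Fin cn → X) (hcomp : ∀ i j, ¬ rl i ≤ cl j → A i j = 0) :
    MatHomSpec A rl cl (matHom A rl cl hcomp) := fun _ _ _ => rfl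

lemma freeMap_apply {n : ℕ} (g : Fin n → X) {a b : X} (hab : a ≤ b)
    (f : (FreeMod k g).V a) (i : {i : Fin n // g i ≤ b}) :
    (FreeMod k g).map hab f i = if h : g i.1 ≤ a then f ⟨i.1, h⟩ else 0 := rfl

/-- The 2×1 matrix (1, -1)ᵀ. -/
def A2 : Matrix (Fin 2) (Fin 1) k := fun i _ => if i = 0 then 1 else -1

end Aux

section Pres

variable {X : Type} [PartialOrder X] {k : Type} [Field k]

lemma dhatI_le {rn cn : ℕ} (p : ℝ) (M N : PersMod (ℝ × ℝ) k)
    (A : Matrix (Fin rn) (Fin cn) k) (rl rl' : Fin rn → ℝ × ℝ) (cl cl' : Fin cn → ℝ × ℝ)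
    (h1 : Presents A rl cl M) (h2 : Presents A rl' cl' N) :
    dhatI p M N ≤ ENNReal.ofReal (labelDist p rl rl' cl cl') := by
  exact iInf_le_of_le rn (iInf_le_of_le cn (iInf_le_of_le A (iInf_le_of_le rl
    (iInf_le_of_le rl' (iInf_le_of_le cl (iInf_le_of_le cl'
    (iInf_le_of_le h1 (iInf_le _ h2))))))))

lemma presents_Q_self (x : X) :
    Presents (fun _ j => j.elim0 : Matrix (Fin 1) (Fin 0) k) (fun _ => x) (fun j => j.elim0)
      (FreeMod k fun _ : Fin 1 => x) := by
  have hcomp : ∀ (i : Fin 1) (j : Fin 0),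
      ¬(fun _ : Fin 1 => x) i ≤ (fun j : Fin 0 => j.elim0) j →
        (fun _ j => j.elim0 : Matrix (Fin 1) (Fin 0) k) i j = 0 := fun _ j => j.elim0
  refine ⟨matHom _ _ _ hcomp, matHom_spec _ _ _ _,
    ⟨fun a => LinearMap.id, fun {a b} h => by rw [LinearMap.comp_id, LinearMap.id_comp]⟩,
    fun a => ⟨fun g => ⟨g, rfl⟩, ?_⟩⟩
  have hzero : ∀ y, (matHom (fun _ j => j.elim0 : Matrix (Fin 1) (Fin 0) k)
      (fun _ => x) (fun j => j.elim0) hcomp).app a y = 0 := by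
    intro y
    funext i
    show (∑ j : Fin 0, if h : (fun j : Fin 0 => j.elim0) j ≤ a
        then (fun _ j => j.elim0 : Matrix (Fin 1) (Fin 0) k) i.1 j * y ⟨j, h⟩ else 0) = (0 : k)
    rw [Finset.univ_eq_empty, Finset.sum_empty]
  ext f
  simp only [LinearMap.mem_ker, LinearMap.id_coe, id_eq, LinearMap.mem_range]
  constructor
  · intro hf
    exact ⟨0, by rw [hzero, hf]⟩
  · rintro ⟨y, rfl⟩
    exact hzero y

lemma presents_Q2 (x : X) :
    Presents (A2 (k := k)) (fun _ : Fin 2 => x) (fun _ : Fin 1 => x)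
      (FreeMod k fun _ : Fin 1 => x) := by
  have hcomp : ∀ (i : Fin 2) (j : Fin 1),
      ¬(fun _ : Fin 2 => x) i ≤ (fun _ : Fin 1 => x) j → A2 (k := k) i j = 0 :=
    fun _ _ h => absurd (le_refl x) h
  refine ⟨matHom _ _ _ hcomp, matHom_spec _ _ _ _, ⟨fun a =>
    { toFun := fun f i => f ⟨0, i.2⟩ + f ⟨1, i.2⟩
      map_add' := by
        intro f g; funext i
        show (f ⟨0, i.2⟩ + g ⟨0, i.2⟩) + (f ⟨1, i.2⟩ + g ⟨1, i.2⟩)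
          = (f ⟨0, i.2⟩ + f ⟨1, i.2⟩) + (g ⟨0, i.2⟩ + g ⟨1, i.2⟩)
        ring
      map_smul' := by
        intro c f; funext i
        show c * f ⟨0, i.2⟩ + c * f ⟨1, i.2⟩ = c * (f ⟨0, i.2⟩ + f ⟨1, i.2⟩)
        ring }, ?_⟩, ?_⟩
  · -- naturality of ψ
    intro a b hab
    apply LinearMap.ext; intro f; funext i
    show (if h : x ≤ a then f ⟨0, h⟩ + f ⟨1, h⟩ else 0)
      = (if h : x ≤ a then f ⟨0, h⟩ else 0) + (if h : x ≤ a then f ⟨1, h⟩ else 0)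
    by_cases h : x ≤ a
    · rw [dif_pos h, dif_pos h, dif_pos h]
    · rw [dif_neg h, dif_neg h, dif_neg h, add_zero]
  · -- surjectivity and kernel condition
    intro a
    constructor
    · intro g
      by_cases hxa : x ≤ a
      · refine ⟨fun i => if i.1 = 0 then g ⟨0, hxa⟩ else 0, ?_⟩
        funext i
        show (if (0 : Fin 2) = 0 then g ⟨0, hxa⟩ else 0)
            + (if (1 : Fin 2) = 0 then g ⟨0, hxa⟩ else 0) = g i
        rw [if_pos rfl, if_neg (by decide), add_zero]
        exact congrArg g (Subtype.ext (Subsingleton.elim _ _))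
      · exact ⟨0, funext fun i => absurd i.2 hxa⟩
    · ext f
      simp only [LinearMap.mem_ker, LinearMap.mem_range, LinearMap.coe_mk, AddHom.coe_mk]
      by_cases hxa : x ≤ a
      · constructor
        · intro hf
          have h0 : f ⟨0, hxa⟩ + f ⟨1, hxa⟩ = 0 :=
            congrFun hf (⟨0, hxa⟩ : {i : Fin 1 // (fun _ : Fin 1 => x) i ≤ a})
          refine ⟨fun _ => f ⟨0, hxa⟩, ?_⟩
          funext i
          show (∑ j : Fin 1, if h : (fun _ : Fin 1 => x) j ≤ a
              then A2 (k := k) i.1 j * f ⟨0, hxa⟩ else 0) = f i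
          rw [Fin.sum_univ_one, dif_pos hxa]
          obtain ⟨i, hi⟩ := i
          fin_cases i
          · show (if (0 : Fin 2) = 0 then (1:k) else -1) * f ⟨0, hxa⟩ = _
            rw [if_pos rfl, one_mul]
            exact congrArg f (Subtype.ext rfl)
          · show (if (1 : Fin 2) = 0 then (1:k) else -1) * f ⟨0, hxa⟩ = _
            rw [if_neg (by decide), neg_one_mul]
            exact (neg_eq_of_add_eq_zero_right h0).trans (congrArg f (Subtype.ext rfl))
        · rintro ⟨y, rfl⟩
          funext i
          have hs := matHom_spec (A2 (k := k)) (fun _ : Fin 2 => x) (fun _ : Fin 1 => x) hcomp a y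
          show (matHom _ _ _ hcomp).app a y ⟨0, i.2⟩ + (matHom _ _ _ hcomp).app a y ⟨1, i.2⟩ = 0
          rw [hs ⟨0, i.2⟩, hs ⟨1, i.2⟩, Fin.sum_univ_one, Fin.sum_univ_one,
            dif_pos hxa, dif_pos hxa]
          show (if (0 : Fin 2) = 0 then (1:k) else -1) * y ⟨0, hxa⟩
              + (if (1 : Fin 2) = 0 then (1:k) else -1) * y ⟨0, hxa⟩ = 0
          rw [if_pos rfl, if_neg (by decide)]
          ring
      · constructor
        · intro _
          exact ⟨0, funext fun i => absurd i.2 hxa⟩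
        · intro _
          exact funext fun i => absurd i.2 hxa

lemma presents_M (M : PersMod (ℝ × ℝ) k)
    (hM1 : ∀ a : ℝ × ℝ, (((0 : ℝ), (-1 : ℝ)) ≤ a ∨ ((-1 : ℝ), (0 : ℝ)) ≤ a) →
      Module.rank k (M.V a) = 1)
    (hM2 : ∀ a : ℝ × ℝ, ¬(((0 : ℝ), (-1 : ℝ)) ≤ a ∨ ((-1 : ℝ), (0 : ℝ)) ≤ a) →
      ∀ v : M.V a, v = 0)
    (hM3 : ∀ (a b : ℝ × ℝ) (h : a ≤ b),
      (((0 : ℝ), (-1 : ℝ)) ≤ a ∨ ((-1 : ℝ), (0 : ℝ)) ≤ a) →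
      Function.Bijective (M.map h)) :
    Presents (A2 (k := k))
      (fun i : Fin 2 => if i = 0 then (((0 : ℝ), (-1 : ℝ)) : ℝ × ℝ) else ((-1 : ℝ), (0 : ℝ)))
      (fun _ : Fin 1 => (((0 : ℝ), (0 : ℝ)) : ℝ × ℝ)) M := by
  set x1 : ℝ × ℝ := ((0 : ℝ), (-1 : ℝ)) with hx1
  set x2 : ℝ × ℝ := ((-1 : ℝ), (0 : ℝ)) with hx2
  set x0 : ℝ × ℝ := ((0 : ℝ), (0 : ℝ)) with hx0
  have hle1 : x1 ≤ x0 := by simp [Prod.le_def, hx1, hx0]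
  have hle2 : x2 ≤ x0 := by simp [Prod.le_def, hx2, hx0]
  have hjoin : ∀ {a : ℝ × ℝ}, x1 ≤ a → x2 ≤ a → x0 ≤ a := by
    intro a h1 h2
    rw [Prod.le_def] at h1 h2 ⊢
    exact ⟨h1.1, h2.2⟩
  have hr0 : ∀ {a : ℝ × ℝ}, x1 ≤ a →
      (fun i : Fin 2 => if i = 0 then x1 else x2) 0 ≤ a := by
    intro a h; simpa using h
  have hr1 : ∀ {a : ℝ × ℝ}, x2 ≤ a →
      (fun i : Fin 2 => if i = 0 then x1 else x2) 1 ≤ a := by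
    intro a h; simpa using h
  have hnr0 : ∀ {a : ℝ × ℝ}, ¬ x1 ≤ a →
      ¬ (fun i : Fin 2 => if i = 0 then x1 else x2) 0 ≤ a := by
    intro a h; simpa using h
  have hnr1 : ∀ {a : ℝ × ℝ}, ¬ x2 ≤ a →
      ¬ (fun i : Fin 2 => if i = 0 then x1 else x2) 1 ≤ a := by
    intro a h; simpa using h
  obtain ⟨v1, hv1⟩ := exists_ne_zero_of_rank_one (hM1 x1 (Or.inl le_rfl))
  obtain ⟨u1, hu1⟩ := exists_ne_zero_of_rank_one (hM1 x2 (Or.inr le_rfl))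
  have hinj : ∀ {a b : ℝ × ℝ} (h : a ≤ b), (x1 ≤ a ∨ x2 ≤ a) →
      ∀ {v : M.V a}, v ≠ 0 → M.map h v ≠ 0 := by
    intro a b h hs v hv hv0
    exact hv ((hM3 a b h hs).1 (by rw [hv0, map_zero]))
  have hw1ne : M.map hle1 v1 ≠ 0 := hinj hle1 (Or.inl le_rfl) hv1
  have hw2ne : M.map hle2 u1 ≠ 0 := hinj hle2 (Or.inr le_rfl) hu1
  obtain ⟨c, hc⟩ := spans_of_rank_one (hM1 x0 (Or.inl hle1)) hw2ne (M.map hle1 v1)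
  have hcne : c ≠ 0 := by
    intro h
    rw [h, zero_smul] at hc
    exact hw1ne hc.symm
  set v2 : M.V x2 := c • u1 with hv2def
  have hv2 : v2 ≠ 0 := smul_ne_zero hcne hu1
  have hkey : M.map hle2 v2 = M.map hle1 v1 := by
    rw [hv2def, map_smul, hc]
  have hcomp : ∀ (i : Fin 2) (j : Fin 1),
      ¬ (fun i : Fin 2 => if i = 0 then x1 else x2) i ≤ (fun _ : Fin 1 => x0) j →
        A2 (k := k) i j = 0 := by
    intro i j h
    exfalso
    apply h
    fin_cases i
    · simpa using hle1
    · simpa using hle2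
  -- the quotient map ψ
  refine ⟨matHom _ _ _ hcomp, matHom_spec _ _ _ _, ⟨fun a =>
    { toFun := fun f =>
        (if h : x1 ≤ a then f ⟨0, hr0 h⟩ • M.map h v1 else 0) +
        (if h : x2 ≤ a then f ⟨1, hr1 h⟩ • M.map h v2 else 0)
      map_add' := by
        intro f g
        have hadd : ∀ z, (f + g) z = f z + g z := fun _ => rfl
        by_cases h1 : x1 ≤ a <;> by_cases h2 : x2 ≤ a <;>
          simp only [dif_pos, dif_neg, h1, h2, hadd, add_smul,
            dite_true, dite_false, add_zero, zero_add] <;> abel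
      map_smul' := by
        intro c' f
        have hs : ∀ z, (c' • f) z = c' * f z := fun _ => rfl
        by_cases h1 : x1 ≤ a <;> by_cases h2 : x2 ≤ a <;>
          simp only [dif_pos, dif_neg, h1, h2, hs, mul_smul,
            dite_true, dite_false, RingHom.id_apply, smul_add, add_zero, zero_add,
            smul_zero] }, ?_⟩, ?_⟩
  · -- naturality of ψ
    intro a b hab
    apply LinearMap.ext
    intro f
    simp only [LinearMap.coe_comp, Function.comp_apply, LinearMap.coe_mk, AddHom.coe_mk]
    rw [map_add]
    have hcmp1 : ∀ (h1 : x1 ≤ a), M.map hab (M.map h1 v1) = M.map (h1.trans hab) v1 :=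
      fun h1 => LinearMap.congr_fun (M.map_comp h1 hab) v1
    have hcmp2 : ∀ (h2 : x2 ≤ a), M.map hab (M.map h2 v2) = M.map (h2.trans hab) v2 :=
      fun h2 => LinearMap.congr_fun (M.map_comp h2 hab) v2
    congr 1
    · by_cases h1 : x1 ≤ a
      · rw [dif_pos h1, dif_pos (h1.trans hab), map_smul, hcmp1 h1, freeMap_apply,
          dif_pos (hr0 h1)]
      · rw [dif_neg h1, map_zero]
        by_cases hb1 : x1 ≤ b
        · rw [dif_pos hb1, freeMap_apply, dif_neg (hnr0 h1), zero_smul]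
        · rw [dif_neg hb1]
    · by_cases h2 : x2 ≤ a
      · rw [dif_pos h2, dif_pos (h2.trans hab), map_smul, hcmp2 h2, freeMap_apply,
          dif_pos (hr1 h2)]
      · rw [dif_neg h2, map_zero]
        by_cases hb2 : x2 ≤ b
        · rw [dif_pos hb2, freeMap_apply, dif_neg (hnr1 h2), zero_smul]
        · rw [dif_neg hb2]
  · -- surjectivity and kernel
    intro a
    have hspec := matHom_spec (A2 (k := k)) (fun i : Fin 2 => if i = 0 then x1 else x2)
      (fun _ : Fin 1 => x0) hcomp
    have hA20 : ∀ j : Fin 1, A2 (k := k) 0 j = 1 := fun _ => if_pos rfl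
    have hA21 : ∀ j : Fin 1, A2 (k := k) 1 j = -1 := fun _ => if_neg (by decide)
    have hval : ∀ (y : (FreeMod k (fun _ : Fin 1 => x0)).V a)
        (i : {i : Fin 2 // (fun i : Fin 2 => if i = 0 then x1 else x2) i ≤ a}),
        (matHom (A2 (k := k)) (fun i : Fin 2 => if i = 0 then x1 else x2)
            (fun _ : Fin 1 => x0) hcomp).app a y i
          = (if h : x0 ≤ a then A2 (k := k) i.1 0 * y ⟨0, h⟩ else 0) := by
      intro y i
      rw [hspec a y i, Fin.sum_univ_one]
      exact dite_congr rfl (fun h => rfl) (fun h => rfl)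
    have hφ0 : ¬ x0 ≤ a → ∀ y, (matHom (A2 (k := k)) (fun i : Fin 2 => if i = 0 then x1 else x2)
        (fun _ : Fin 1 => x0) hcomp).app a y = 0 := by
      intro h00 y
      funext i
      rw [hspec a y i, Fin.sum_univ_one, dif_neg h00]
      rfl
    constructor
    · -- surjectivity
      intro w
      simp only [LinearMap.coe_mk, AddHom.coe_mk]
      by_cases h1 : x1 ≤ a
      · obtain ⟨c', hc'⟩ := spans_of_rank_one (hM1 a (Or.inl h1))
          (hinj h1 (Or.inl le_rfl) hv1) w
        refine ⟨fun i => if i.1 = (0 : Fin 2) then c' else 0, ?_⟩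
        by_cases h2 : x2 ≤ a
        · rw [dif_pos h1, dif_pos h2]
          show (if (0 : Fin 2) = 0 then c' else 0) • M.map h1 v1
            + (if (1 : Fin 2) = 0 then c' else 0) • M.map h2 v2 = w
          rw [if_pos rfl, if_neg (by decide : ¬ (1 : Fin 2) = 0), zero_smul, add_zero]
          exact hc'
        · rw [dif_pos h1, dif_neg h2, add_zero]
          show (if (0 : Fin 2) = 0 then c' else 0) • M.map h1 v1 = w
          rw [if_pos rfl]
          exact hc'
      · by_cases h2 : x2 ≤ a
        · obtain ⟨c', hc'⟩ := spans_of_rank_one (hM1 a (Or.inr h2))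
            (hinj h2 (Or.inr le_rfl) hv2) w
          refine ⟨fun i => if i.1 = (1 : Fin 2) then c' else 0, ?_⟩
          rw [dif_neg h1, dif_pos h2, zero_add]
          show (if (1 : Fin 2) = 1 then c' else 0) • M.map h2 v2 = w
          rw [if_pos rfl]
          exact hc'
        · refine ⟨0, ?_⟩
          rw [dif_neg h1, dif_neg h2, add_zero]
          exact ((hM2 a (not_or.mpr ⟨h1, h2⟩)) w).symm
    · -- kernel = range
      ext f
      simp only [LinearMap.mem_ker, LinearMap.mem_range, LinearMap.coe_mk, AddHom.coe_mk]
      by_cases h00 : x0 ≤ a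
      · have h1 : x1 ≤ a := hle1.trans h00
        have h2 : x2 ≤ a := hle2.trans h00
        have hz1 : M.map h1 v1 = M.map h00 (M.map hle1 v1) :=
          (LinearMap.congr_fun (M.map_comp hle1 h00) v1).symm
        have hz2 : M.map h2 v2 = M.map h00 (M.map hle1 v1) := by
          rw [← hkey]
          exact (LinearMap.congr_fun (M.map_comp hle2 h00) v2).symm
        have hzne : M.map h00 (M.map hle1 v1) ≠ 0 := hinj h00 (Or.inl hle1) hw1ne
        constructor
        · intro hf
          rw [dif_pos h1, dif_pos h2, hz1, hz2, ← add_smul] at hf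
          have hsum : f ⟨0, hr0 h1⟩ + f ⟨1, hr1 h2⟩ = 0 := by
            rcases smul_eq_zero.mp hf with h | h
            · exact h
            · exact absurd h hzne
          refine ⟨fun _ => f ⟨0, hr0 h1⟩, ?_⟩
          funext i
          refine (hval _ i).trans ?_
          refine (dif_pos h00).trans ?_
          obtain ⟨i, hi⟩ := i
          fin_cases i
          · show A2 (k := k) 0 0 * f ⟨0, hr0 h1⟩ = f ⟨0, hr0 h1⟩
            rw [hA20, one_mul]
          · show A2 (k := k) 1 0 * f ⟨0, hr0 h1⟩ = f ⟨1, hr1 h2⟩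
            rw [hA21, neg_one_mul]
            exact neg_eq_of_add_eq_zero_right hsum
        · rintro ⟨y, rfl⟩
          rw [dif_pos h1, dif_pos h2, hz1, hz2, ← add_smul, hval y ⟨0, hr0 h1⟩,
            hval y ⟨1, hr1 h2⟩, dif_pos h00, dif_pos h00]
          show (A2 (k := k) 0 0 * y ⟨0, h00⟩ + A2 (k := k) 1 0 * y ⟨0, h00⟩)
              • M.map h00 (M.map hle1 v1) = 0
          rw [hA20, hA21, one_mul, neg_one_mul, add_neg_cancel, zero_smul]
      · by_cases h1 : x1 ≤ a
        · have h2 : ¬ x2 ≤ a := fun h2 => h00 (hjoin h1 h2)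
          constructor
          · intro hf
            rw [dif_pos h1, dif_neg h2, add_zero] at hf
            have hf0 : f ⟨0, hr0 h1⟩ = 0 := by
              rcases smul_eq_zero.mp hf with h | h
              · exact h
              · exact absurd h (hinj h1 (Or.inl le_rfl) hv1)
            refine ⟨0, ?_⟩
            have hfz : f = 0 := by
              funext i
              obtain ⟨i, hi⟩ := i
              fin_cases i
              · exact hf0
              · exact absurd hi (hnr1 h2)
            rw [hfz]
            exact hφ0 h00 0
          · rintro ⟨y, rfl⟩
            rw [dif_pos h1, dif_neg h2, add_zero, hφ0 h00 y]
            exact zero_smul k (M.map h1 v1)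
        · by_cases h2 : x2 ≤ a
          · constructor
            · intro hf
              rw [dif_neg h1, dif_pos h2, zero_add] at hf
              have hf1 : f ⟨1, hr1 h2⟩ = 0 := by
                rcases smul_eq_zero.mp hf with h | h
                · exact h
                · exact absurd h (hinj h2 (Or.inr le_rfl) hv2)
              refine ⟨0, ?_⟩
              have hfz : f = 0 := by
                funext i
                obtain ⟨i, hi⟩ := i
                fin_cases i
                · exact absurd hi (hnr0 h1)
                · exact hf1
              rw [hfz]
              exact hφ0 h00 0
            · rintro ⟨y, rfl⟩
              rw [dif_neg h1, dif_pos h2, zero_add, hφ0 h00 y]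
              exact zero_smul k (M.map h2 v2)
          · constructor
            · intro _
              refine ⟨0, ?_⟩
              have hfz : f = 0 := by
                funext i
                obtain ⟨i, hi⟩ := i
                fin_cases i
                · exact absurd hi (hnr0 h1)
                · exact absurd hi (hnr1 h2)
              rw [hfz]
              exact hφ0 h00 0
            · intro _
              rw [dif_neg h1, dif_neg h2, add_zero]

lemma lower_bound (p r : ℝ) (hp : 1 ≤ p) (hr : 0 ≤ r) (M : PersMod (ℝ × ℝ) k)
    (hM1 : ∀ a : ℝ × ℝ, (((0 : ℝ), (-1 : ℝ)) ≤ a ∨ ((-1 : ℝ), (0 : ℝ)) ≤ a) →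
      Module.rank k (M.V a) = 1)
    (hM2 : ∀ a : ℝ × ℝ, ¬(((0 : ℝ), (-1 : ℝ)) ≤ a ∨ ((-1 : ℝ), (0 : ℝ)) ≤ a) →
      ∀ v : M.V a, v = 0)
    (hM3 : ∀ (a b : ℝ × ℝ) (h : a ≤ b),
      (((0 : ℝ), (-1 : ℝ)) ≤ a ∨ ((-1 : ℝ), (0 : ℝ)) ≤ a) →
      Function.Bijective (M.map h))
    {rn cn : ℕ} (A : Matrix (Fin rn) (Fin cn) k) (rl rl' : Fin rn → ℝ × ℝ)
    (cl cl' : Fin cn → ℝ × ℝ)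
    (hPM : Presents A rl cl M)
    (hPQ : Presents A rl' cl' (FreeMod k fun _ : Fin 1 => ((r, r) : ℝ × ℝ))) :
    (4 : ℝ) ^ (1 / p) * r ≤ labelDist p rl rl' cl cl' := by
  have hp0 : (0 : ℝ) < p := lt_of_lt_of_le one_pos hp
  obtain ⟨φ, hφ, ψ, hψ⟩ := hPM
  obtain ⟨φ', hφ', ψ', hψ'⟩ := hPQ
  -- a common upper bound for all labels
  obtain ⟨B, hBr, hBc, hB0, hBrr⟩ : ∃ B : ℝ, (∀ i, rl i ≤ (B, B) ∧ rl' i ≤ (B, B)) ∧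
      (∀ j, cl j ≤ (B, B) ∧ cl' j ≤ (B, B)) ∧ 0 ≤ B ∧ r ≤ B := by
    set st : Finset ℝ := ({0, r} : Finset ℝ)
      ∪ Finset.univ.image (fun i => max (max (rl i).1 (rl i).2) (max (rl' i).1 (rl' i).2))
      ∪ Finset.univ.image (fun j => max (max (cl j).1 (cl j).2) (max (cl' j).1 (cl' j).2))
      with hst
    have hne : st.Nonempty := ⟨0, by simp [hst]⟩
    refine ⟨st.max' hne, fun i => ?_, fun j => ?_, ?_, ?_⟩
    · have hmem : max (max (rl i).1 (rl i).2) (max (rl' i).1 (rl' i).2) ∈ st := by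
        rw [hst]
        apply Finset.mem_union_left
        apply Finset.mem_union_right
        exact Finset.mem_image_of_mem _ (Finset.mem_univ i)
      have hle := Finset.le_max' st _ hmem
      constructor <;> rw [Prod.le_def] <;> constructor
      · exact le_trans (le_trans (le_max_left _ _) (le_max_left _ _)) hle
      · exact le_trans (le_trans (le_max_right _ _) (le_max_left _ _)) hle
      · exact le_trans (le_trans (le_max_left _ _) (le_max_right _ _)) hle
      · exact le_trans (le_trans (le_max_right _ _) (le_max_right _ _)) hle
    · have hmem : max (max (cl j).1 (cl j).2) (max (cl' j).1 (cl' j).2) ∈ st := by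
        rw [hst]
        apply Finset.mem_union_right
        exact Finset.mem_image_of_mem _ (Finset.mem_univ j)
      have hle := Finset.le_max' st _ hmem
      constructor <;> rw [Prod.le_def] <;> constructor
      · exact le_trans (le_trans (le_max_left _ _) (le_max_left _ _)) hle
      · exact le_trans (le_trans (le_max_right _ _) (le_max_left _ _)) hle
      · exact le_trans (le_trans (le_max_left _ _) (le_max_right _ _)) hle
      · exact le_trans (le_trans (le_max_right _ _) (le_max_right _ _)) hle
    · exact Finset.le_max' st 0 (by simp [hst])
    · exact Finset.le_max' st r (by simp [hst])
  set top : ℝ × ℝ := (B, B) with htop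
  -- rows not above (r,r) in the Q-labeling die at top in M's presentation
  have hS1 : ∀ i : Fin rn, ¬ ((r, r) : ℝ × ℝ) ≤ rl' i →
      ψ.app top (ind rl top i) = 0 := by
    intro i hi
    have ha : rl' i ≤ top := (hBr i).2
    have hQ0 : ψ'.app (rl' i) (ind rl' (rl' i) i) = 0 :=
      funext fun z => absurd z.2 hi
    have hnat := LinearMap.congr_fun (ψ'.natural ha) (ind rl' (rl' i) i)
    rw [LinearMap.comp_apply, LinearMap.comp_apply, hQ0, map_zero,
      ind_map rl' ha (le_refl (rl' i))] at hnat
    have h2 : ind rl' top i ∈ LinearMap.range (φ'.app top) := by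
      rw [← (hψ' top).2]
      exact LinearMap.mem_ker.mpr hnat.symm
    obtain ⟨g, hg⟩ := h2
    have h3 : φ.app top (fun j => g ⟨j.1, (hBc j.1).2⟩) = ind rl top i := by
      funext i0
      rw [hφ top _ i0]
      have h4 := congrFun hg ⟨i0.1, (hBr i0.1).2⟩
      rw [hφ' top g ⟨i0.1, (hBr i0.1).2⟩] at h4
      have h4' : (∑ j : Fin cn, @dite k (cl' j ≤ top) (Classical.propDecidable _)
            (fun h => A i0.1 j * g ⟨j, h⟩) (fun _ => 0))
          = ind rl' top i ⟨i0.1, (hBr i0.1).2⟩ := h4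
      have e2 : (∑ j : Fin cn, @dite k (cl' j ≤ top) (Classical.propDecidable _)
            (fun h => A i0.1 j * g ⟨j, h⟩) (fun _ => 0))
          = ∑ j : Fin cn, A i0.1 j * g ⟨j, (hBc j).2⟩ := by
        refine Finset.sum_congr rfl fun j _ => ?_
        rw [dif_pos (hBc j).2]
      rw [e2] at h4'
      show (∑ j : Fin cn, @dite k (cl j ≤ top) (Classical.propDecidable _)
          (fun h => A i0.1 j * g ⟨j, (hBc j).2⟩) (fun _ => 0))
        = ind rl top i i0
      have e1 : (∑ j : Fin cn, @dite k (cl j ≤ top) (Classical.propDecidable _)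
            (fun h => A i0.1 j * g ⟨j, (hBc j).2⟩) (fun _ => 0))
          = ∑ j : Fin cn, A i0.1 j * g ⟨j, (hBc j).2⟩ := by
        refine Finset.sum_congr rfl fun j _ => ?_
        rw [dif_pos (hBc j).1]
      rw [e1, h4']
      rfl
    have h5 : ind rl top i ∈ LinearMap.ker (ψ.app top) := by
      rw [(hψ top).2]
      exact ⟨_, h3⟩
    exact LinearMap.mem_ker.mp h5
  -- rows below (-1,-1) die at top as well
  have hS3 : ∀ i : Fin rn, rl i ≤ ((-1, -1) : ℝ × ℝ) →
      ψ.app top (ind rl top i) = 0 := by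
    intro i hi
    have ha : ((-1, -1) : ℝ × ℝ) ≤ top := by
      rw [Prod.le_def]
      constructor <;> · show (-1 : ℝ) ≤ B; linarith
    have hzero : ∀ v : M.V ((-1, -1) : ℝ × ℝ), v = 0 := by
      apply hM2
      intro hcase
      rcases hcase with h | h <;> rw [Prod.le_def] at h
      · have := h.1; norm_num at this
      · have := h.2; norm_num at this
    have hM0 : ψ.app ((-1, -1) : ℝ × ℝ) (ind rl ((-1, -1) : ℝ × ℝ) i) = 0 :=
      hzero _
    have hnat := LinearMap.congr_fun (ψ.natural ha) (ind rl ((-1, -1) : ℝ × ℝ) i)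
    rw [LinearMap.comp_apply, LinearMap.comp_apply, hM0, map_zero, ind_map rl ha hi] at hnat
    exact hnat.symm
  -- existence of a live row below a support point
  have hex : ∀ a : ℝ × ℝ, a ≤ top → ((((0:ℝ), (-1:ℝ)) : ℝ × ℝ) ≤ a ∨ (((-1:ℝ), (0:ℝ)) : ℝ × ℝ) ≤ a) →
      ∃ i : Fin rn, rl i ≤ a ∧ ψ.app top (ind rl top i) ≠ 0 := by
    intro a hatop hsup
    obtain ⟨v0, hv0⟩ := exists_ne_zero_of_rank_one (hM1 a hsup)
    obtain ⟨x, hx⟩ := (hψ a).1 v0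
    have hnat := LinearMap.congr_fun (ψ.natural hatop) x
    rw [LinearMap.comp_apply, LinearMap.comp_apply, hx] at hnat
    have hnz : ψ.app top ((FreeMod k rl).map hatop x) ≠ 0 := by
      rw [← hnat]
      intro h0
      exact hv0 ((hM3 a top hatop hsup).1 (by rw [h0, map_zero]))
    rw [map_eq_sum_ind rl hatop x, map_sum] at hnz
    obtain ⟨j, _, hj⟩ := Finset.exists_ne_zero_of_sum_ne_zero hnz
    refine ⟨j.1, j.2, fun h0 => hj ?_⟩
    rw [map_smul, h0, smul_zero]
  obtain ⟨i1, hi1a, hi1D⟩ := hex ((0:ℝ), (-1:ℝ))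
    (by rw [Prod.le_def]; constructor <;> · simp only []; linarith) (Or.inl le_rfl)
  obtain ⟨i2, hi2a, hi2D⟩ := hex ((-1:ℝ), (0:ℝ))
    (by rw [Prod.le_def]; constructor <;> · simp only []; linarith) (Or.inr le_rfl)
  have hne12 : i1 ≠ i2 := by
    intro h
    apply hi1D
    apply hS3
    rw [Prod.le_def] at hi1a hi2a ⊢
    subst h
    exact ⟨hi2a.1, hi1a.2⟩
  have hq1 : ((r, r) : ℝ × ℝ) ≤ rl' i1 := by
    by_contra h
    exact hi1D (hS1 i1 h)
  have hq2 : ((r, r) : ℝ × ℝ) ≤ rl' i2 := by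
    by_contra h
    exact hi2D (hS1 i2 h)
  -- arithmetic
  rw [Prod.le_def] at hi1a hi2a hq1 hq2
  set F : Fin rn → ℝ := fun i => |(rl i).1 - (rl' i).1| ^ p + |(rl i).2 - (rl' i).2| ^ p
    with hF
  have hFnn : ∀ i, 0 ≤ F i := fun i =>
    add_nonneg (Real.rpow_nonneg (abs_nonneg _) p) (Real.rpow_nonneg (abs_nonneg _) p)
  have hb1 : r ^ p + r ^ p ≤ F i1 := by
    have e1 : r ≤ |(rl i1).1 - (rl' i1).1| := by
      have h1 : (rl i1).1 ≤ 0 := hi1a.1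
      have h2 : r ≤ (rl' i1).1 := hq1.1
      rw [abs_sub_comm]
      refine le_trans ?_ (le_abs_self _)
      linarith
    have e2 : r ≤ |(rl i1).2 - (rl' i1).2| := by
      have h1 : (rl i1).2 ≤ -1 := hi1a.2
      have h2 : r ≤ (rl' i1).2 := hq1.2
      rw [abs_sub_comm]
      refine le_trans ?_ (le_abs_self _)
      linarith
    exact add_le_add (Real.rpow_le_rpow hr e1 hp0.le) (Real.rpow_le_rpow hr e2 hp0.le)
  have hb2 : r ^ p + r ^ p ≤ F i2 := by
    have e1 : r ≤ |(rl i2).1 - (rl' i2).1| := by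
      have h1 : (rl i2).1 ≤ -1 := hi2a.1
      have h2 : r ≤ (rl' i2).1 := hq2.1
      rw [abs_sub_comm]
      refine le_trans ?_ (le_abs_self _)
      linarith
    have e2 : r ≤ |(rl i2).2 - (rl' i2).2| := by
      have h1 : (rl i2).2 ≤ 0 := hi2a.2
      have h2 : r ≤ (rl' i2).2 := hq2.2
      rw [abs_sub_comm]
      refine le_trans ?_ (le_abs_self _)
      linarith
    exact add_le_add (Real.rpow_le_rpow hr e1 hp0.le) (Real.rpow_le_rpow hr e2 hp0.le)
  have hrow : 4 * r ^ p ≤ ∑ i, F i := by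
    have hsub := Finset.sum_le_sum_of_subset_of_nonneg
      (Finset.subset_univ ({i1, i2} : Finset (Fin rn)))
      (fun i _ _ => hFnn i)
    rw [Finset.sum_pair hne12] at hsub
    calc 4 * r ^ p = (r ^ p + r ^ p) + (r ^ p + r ^ p) := by ring
      _ ≤ F i1 + F i2 := add_le_add hb1 hb2
      _ ≤ ∑ i, F i := hsub
  have hcol : (0:ℝ) ≤ ∑ j, (|(cl j).1 - (cl' j).1| ^ p + |(cl j).2 - (cl' j).2| ^ p) :=
    Finset.sum_nonneg fun j _ =>
      add_nonneg (Real.rpow_nonneg (abs_nonneg _) p) (Real.rpow_nonneg (abs_nonneg _) p)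
  have htot : 4 * r ^ p ≤ (∑ i, F i) +
      ∑ j, (|(cl j).1 - (cl' j).1| ^ p + |(cl j).2 - (cl' j).2| ^ p) := by linarith
  have hrp : ((4 : ℝ) * r ^ p) ^ (1 / p) = (4 : ℝ) ^ (1 / p) * r := by
    rw [Real.mul_rpow (by norm_num) (Real.rpow_nonneg hr p), ← Real.rpow_mul hr,
      mul_one_div_cancel (ne_of_gt hp0), Real.rpow_one]
  rw [labelDist, ← hrp]
  exact Real.rpow_le_rpow (by positivity) htot (one_div_nonneg.mpr hp0.le)

end Pres


/-- Let `p ∈ [1,∞)` and let `M` be the ℝ²-persistence module with `M_a = k` when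
`a ≥ (0,−1)` or `a ≥ (−1,0)` and `M_a = 0` otherwise, identity internal maps where
possible (characterized up to isomorphism by the hypotheses below); `Q^x` denotes the
free module on one generator at `x`. Then `d̂_I^p(M, Q^{(r,r)}) ≥ 4^{1/p} r`,
`d̂_I^p(M, Q^{(0,0)}) ≤ 2^{1/p}`, `d̂_I^p(Q^{(0,0)}, Q^{(r,r)}) ≤ 2^{1/p} r`;
consequently, for `r` large enough, `d̂_I^p` violates the triangle inequality. -/
theorem dhatI_fails_triangle {k : Type} [Field k] (p : ℝ) (hp : 1 ≤ p)
    (M : PersMod (ℝ × ℝ) k)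
    (hM1 : ∀ a : ℝ × ℝ, (((0 : ℝ), (-1 : ℝ)) ≤ a ∨ ((-1 : ℝ), (0 : ℝ)) ≤ a) →
      Module.rank k (M.V a) = 1)
    (hM2 : ∀ a : ℝ × ℝ, ¬(((0 : ℝ), (-1 : ℝ)) ≤ a ∨ ((-1 : ℝ), (0 : ℝ)) ≤ a) →
      ∀ v : M.V a, v = 0)
    (hM3 : ∀ (a b : ℝ × ℝ) (h : a ≤ b),
      (((0 : ℝ), (-1 : ℝ)) ≤ a ∨ ((-1 : ℝ), (0 : ℝ)) ≤ a) →
      Function.Bijective (M.map h)) :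
    (∀ r : ℝ, 0 ≤ r →
      ENNReal.ofReal ((4 : ℝ) ^ (1 / p) * r) ≤
          dhatI p M (FreeMod k fun _ : Fin 1 => ((r, r) : ℝ × ℝ)) ∧
        dhatI p M (FreeMod k fun _ : Fin 1 => ((0, 0) : ℝ × ℝ)) ≤
          ENNReal.ofReal ((2 : ℝ) ^ (1 / p)) ∧
        dhatI p (FreeMod k fun _ : Fin 1 => ((0, 0) : ℝ × ℝ))
            (FreeMod k fun _ : Fin 1 => ((r, r) : ℝ × ℝ)) ≤
          ENNReal.ofReal ((2 : ℝ) ^ (1 / p) * r)) ∧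
    (∃ r : ℝ, 0 < r ∧
      dhatI p M (FreeMod k fun _ : Fin 1 => ((0, 0) : ℝ × ℝ)) +
          dhatI p (FreeMod k fun _ : Fin 1 => ((0, 0) : ℝ × ℝ))
            (FreeMod k fun _ : Fin 1 => ((r, r) : ℝ × ℝ)) <
        dhatI p M (FreeMod k fun _ : Fin 1 => ((r, r) : ℝ × ℝ))) := by
  have hp0 : (0 : ℝ) < p := lt_of_lt_of_le one_pos hp
  have hPM := presents_M M hM1 hM2 hM3
  have main : ∀ r : ℝ, 0 ≤ r →
      ENNReal.ofReal ((4 : ℝ) ^ (1 / p) * r) ≤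
          dhatI p M (FreeMod k fun _ : Fin 1 => ((r, r) : ℝ × ℝ)) ∧
        dhatI p M (FreeMod k fun _ : Fin 1 => ((0, 0) : ℝ × ℝ)) ≤
          ENNReal.ofReal ((2 : ℝ) ^ (1 / p)) ∧
        dhatI p (FreeMod k fun _ : Fin 1 => ((0, 0) : ℝ × ℝ))
            (FreeMod k fun _ : Fin 1 => ((r, r) : ℝ × ℝ)) ≤
          ENNReal.ofReal ((2 : ℝ) ^ (1 / p) * r) := by
    intro r hr
    refine ⟨?_, ?_, ?_⟩
    · refine le_iInf fun rn => le_iInf fun cn => le_iInf fun A => le_iInf fun rla =>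
        le_iInf fun rla' => le_iInf fun cla => le_iInf fun cla' =>
        le_iInf fun h1 => le_iInf fun h2 => ?_
      exact ENNReal.ofReal_le_ofReal
        (lower_bound p r hp hr M hM1 hM2 hM3 A rla rla' cla cla' h1 h2)
    · refine le_trans (dhatI_le p M _ (A2 (k := k))
        (fun i : Fin 2 => if i = 0 then (((0:ℝ), (-1:ℝ)) : ℝ × ℝ) else ((-1:ℝ), (0:ℝ)))
        (fun _ : Fin 2 => (((0:ℝ), (0:ℝ)) : ℝ × ℝ))
        (fun _ : Fin 1 => (((0:ℝ), (0:ℝ)) : ℝ × ℝ))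
        (fun _ : Fin 1 => (((0:ℝ), (0:ℝ)) : ℝ × ℝ))
        hPM (presents_Q2 _)) (le_of_eq ?_)
      congr 1
      rw [labelDist]
      congr 1
      rw [Fin.sum_univ_two, Fin.sum_univ_one]
      norm_num [Real.zero_rpow (ne_of_gt hp0), Real.one_rpow]
    · refine le_trans (dhatI_le p _ _ ((fun _ j => j.elim0) : Matrix (Fin 1) (Fin 0) k)
        (fun _ : Fin 1 => (((0:ℝ), (0:ℝ)) : ℝ × ℝ))
        (fun _ : Fin 1 => ((r, r) : ℝ × ℝ))
        (fun j : Fin 0 => j.elim0) (fun j : Fin 0 => j.elim0)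
        (presents_Q_self _) (presents_Q_self _)) (le_of_eq ?_)
      congr 1
      rw [labelDist]
      have hbase : ((∑ i : Fin 1, (|(((0:ℝ), (0:ℝ)) : ℝ × ℝ).1 - ((r, r) : ℝ × ℝ).1| ^ p
            + |(((0:ℝ), (0:ℝ)) : ℝ × ℝ).2 - ((r, r) : ℝ × ℝ).2| ^ p))
          + (∑ j : Fin 0, (|((fun j : Fin 0 => (j.elim0 : ℝ × ℝ)) j).1
              - ((fun j : Fin 0 => (j.elim0 : ℝ × ℝ)) j).1| ^ p
            + |((fun j : Fin 0 => (j.elim0 : ℝ × ℝ)) j).2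
              - ((fun j : Fin 0 => (j.elim0 : ℝ × ℝ)) j).2| ^ p)))
          = 2 * r ^ p := by
        rw [Fin.sum_univ_one, Finset.univ_eq_empty, Finset.sum_empty, add_zero]
        have habs : |(0:ℝ) - r| = r := by
          rw [zero_sub, abs_neg, abs_of_nonneg hr]
        show |(0:ℝ) - r| ^ p + |(0:ℝ) - r| ^ p = 2 * r ^ p
        rw [habs]
        ring
      rw [hbase, Real.mul_rpow (by norm_num) (Real.rpow_nonneg hr p),
        ← Real.rpow_mul hr, mul_one_div_cancel (ne_of_gt hp0), Real.rpow_one]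
  refine ⟨main, ?_⟩
  set α := (2:ℝ) ^ (1/p) with hα
  set β := (4:ℝ) ^ (1/p) with hβ
  have hαpos : 0 < α := Real.rpow_pos_of_pos (by norm_num) _
  have hαβ : α < β := by
    rw [hα, hβ]
    exact Real.rpow_lt_rpow (by norm_num) (by norm_num) (by positivity)
  set r : ℝ := (α + 1) / (β - α) with hrdef
  have hrpos : 0 < r := div_pos (by linarith) (by linarith)
  obtain ⟨hlow, hub1, hub2⟩ := main r hrpos.le
  refine ⟨r, hrpos, ?_⟩
  have hkey : β * r - α * r = α + 1 := by
    rw [← sub_mul, hrdef, mul_div_cancel₀]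
    linarith
  calc dhatI p M (FreeMod k fun _ : Fin 1 => ((0, 0) : ℝ × ℝ)) +
        dhatI p (FreeMod k fun _ : Fin 1 => ((0, 0) : ℝ × ℝ))
          (FreeMod k fun _ : Fin 1 => ((r, r) : ℝ × ℝ))
      ≤ ENNReal.ofReal α + ENNReal.ofReal (α * r) := add_le_add hub1 hub2
    _ = ENNReal.ofReal (α + α * r) :=
        (ENNReal.ofReal_add hαpos.le (by positivity)).symm
    _ < ENNReal.ofReal (β * r) := by
        rw [ENNReal.ofReal_lt_ofReal_iff (by positivity)]
        linarith
    _ ≤ dhatI p M (FreeMod k fun _ : Fin 1 => ((r, r) : ℝ × ℝ)) := hlow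

end
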